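/- Let l₁, …, l_k ∈ ℝ be ℤ-independent. Then the pushforward, under the map π̂_L : G_Bohr → 𝕋^k, ψ ↦ (ψ(l₁), …, ψ(l_k)), of the Haar probability measure μ_Bohr of the compact group G_Bohr equals the Haar probability measure of the compact group 𝕋^k. -/

import Mathlib

open MeasureTheory

/-- The Bohr compactification of `ℝ`, realized as the group of all (not necessarily
continuous) group homomorphisms `(ℝ, +) → 𝕋`, viewed as a subgroup of the product group
`∏_{x ∈ ℝ} 𝕋`; as a subtype it carries the topology of pointwise convergence. -/
noncomputable def bohrSubgroup : Subgroup (ℝ → Circle) where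
  carrier := {ψ | ∀ x y : ℝ, ψ (x + y) = ψ x * ψ y}
  mul_mem' := by
    intro a b ha hb x y
    simp only [Pi.mul_apply, ha x y, hb x y]
    exact mul_mul_mul_comm _ _ _ _
  one_mem' := by intro x y; simp
  inv_mem' := by
    intro a ha x y
    simp only [Pi.inv_apply, ha x y, mul_inv]

/-- The Bohr compactification of `ℝ` (as a type, with the topology of pointwise
convergence inherited from the product `∏_{x ∈ ℝ} 𝕋`). -/
abbrev GBohr : Type := bohrSubgroup

noncomputable instance : MeasurableSpace Circle := borel _
instance : BorelSpace Circle := ⟨rfl⟩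

noncomputable instance : MeasurableSpace GBohr := borel _
instance : BorelSpace GBohr := ⟨rfl⟩


instance : CompactSpace GBohr := by
  have hclosed : IsClosed ((bohrSubgroup : Set (ℝ → Circle))) := by
    have h : (bohrSubgroup : Set (ℝ → Circle)) =
        ⋂ (x : ℝ) (y : ℝ), {ψ : ℝ → Circle | ψ (x + y) = ψ x * ψ y} := by
      ext ψ
      simp only [Set.mem_iInter, Set.mem_setOf_eq]
      rfl
    rw [h]
    exact isClosed_iInter fun x => isClosed_iInter fun y =>
      isClosed_eq (continuous_apply _) ((continuous_apply x).mul (continuous_apply y))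
  exact isCompact_iff_compactSpace.mp hclosed.isCompact

noncomputable instance : DivisibleBy (Additive Circle) ℤ :=
  Function.Surjective.divisibleBy Circle.expHom
    (fun z => ⟨Complex.arg (Additive.toMul z : Circle), congrArg Additive.ofMul
      (Circle.exp_arg (Additive.toMul z))⟩)
    (fun a n => map_zsmul Circle.expHom n a)

lemma bohr_surj {k : ℕ} (l : Fin k → ℝ) (hl : LinearIndependent ℚ l) :
    Function.Surjective (fun ψ : GBohr => fun i : Fin k => (ψ : ℝ → Circle) (l i)) := by
  intro t
  have hli : LinearIndependent ℤ l := by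
    refine hl.restrict_scalars ?_
    intro a b hab
    simpa [zsmul_eq_mul] using hab
  let b : Module.Basis (Fin k) ℤ ↥(Submodule.span ℤ (Set.range l)) := Module.Basis.span hli
  let g : ↥(Submodule.span ℤ (Set.range l)) →ₗ[ℤ] Additive Circle :=
    b.constr ℤ (fun i => Additive.ofMul (t i))
  haveI : Module.Injective ℤ (Additive Circle) :=
    (Module.Baer.of_divisible (Additive Circle)).injective
  obtain ⟨h, hh⟩ := Module.Injective.extension_property ℤ (Additive Circle)
    (↥(Submodule.span ℤ (Set.range l))) ℝ
    (Submodule.span ℤ (Set.range l)).subtype (Submodule.injective_subtype _) g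
  have hmem : (fun x : ℝ => (Additive.toMul (h x) : Circle)) ∈ bohrSubgroup := by
    intro x y
    simp [map_add]
  refine ⟨⟨_, hmem⟩, ?_⟩
  funext i
  have hb : ((b i : ↥(Submodule.span ℤ (Set.range l))) : ℝ) = l i := congrArg Subtype.val (Module.Basis.span_apply hli i)
  have h1 : h (l i) = g (b i) := by
    rw [← hb]
    exact congrFun (congrArg (fun (m : _ →ₗ[ℤ] Additive Circle) => (m : _ → Additive Circle)) hh) (b i)
  have h2 : g (b i) = Additive.ofMul (t i) := b.constr_basis ℤ _ i
  show (Additive.toMul (h (l i)) : Circle) = t i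
  rw [h1, h2]
  rfl

/-- For ℤ-independent reals `l₁, …, l_k`, the pushforward of the Haar
probability measure of `G_Bohr` under `ψ ↦ (ψ(l₁), …, ψ(l_k))` is the Haar probability
measure of the torus `𝕋^k`. -/
theorem statement8 {k : ℕ} (l : Fin k → ℝ) (hl : LinearIndependent ℚ l)
    (μB : Measure GBohr) [μB.IsHaarMeasure] [IsProbabilityMeasure μB]
    (μT : Measure (Fin k → Circle)) [μT.IsHaarMeasure] [IsProbabilityMeasure μT] :
    μB.map (fun ψ : GBohr => fun i : Fin k => (ψ : ℝ → Circle) (l i)) = μT := by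
  let f : GBohr →* (Fin k → Circle) :=
    { toFun := fun ψ => fun i => (ψ : ℝ → Circle) (l i)
      map_one' := rfl
      map_mul' := fun a b => rfl }
  have hcont : Continuous f :=
    continuous_pi fun i => (continuous_apply (l i)).comp continuous_subtype_val
  exact (MonoidHom.measurePreserving (f := f) hcont (bohr_surj l hl) (by simp)).map_eq
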